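/- Let V be a real inner product space, z ∈ V with ⟨z,z⟩ > 0, p ∈ [0,1], and let X₀, …, Xₙ ∈ V satisfy cov_p(Xᵢ, Xⱼ; z) = 0 for all i ≠ j and var_p(Xⱼ; z) > 0 for all j, where cov_p(x,y;z) = ⟨x,y⟩ - p·⟨x,z⟩·⟨y,z⟩/⟨z,z⟩. Then X₀, …, Xₙ are linearly independent. -/
import Mathlib


open RealInnerProductSpace

/-- The p-covariance of `x` and `y` with respect to the fixed element `z`. -/
noncomputable def pCov {V : Type*} [NormedAddCommGroup V] [InnerProductSpace ℝ V]
    (p : ℝ) (z x y : V) : ℝ :=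
  ⟪x, y⟫ - p * ⟪x, z⟫ * ⟪y, z⟫ / ⟪z, z⟫

/-- The p-variance of `x` with respect to the fixed element `z`. -/
noncomputable def pVar {V : Type*} [NormedAddCommGroup V] [InnerProductSpace ℝ V]
    (p : ℝ) (z x : V) : ℝ :=
  pCov p z x x


lemma pCov_sum_left {V : Type*} [NormedAddCommGroup V] [InnerProductSpace ℝ V]
    (p : ℝ) (z : V) {ι : Type*} (s : Finset ι) (c : ι → ℝ) (x : ι → V) (y : V) :
    pCov p z (∑ i ∈ s, c i • x i) y = ∑ i ∈ s, c i * pCov p z (x i) y := by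
  simp only [pCov, sum_inner, inner_smul_left, RCLike.conj_to_real, Finset.sum_mul,
    Finset.mul_sum, mul_sub]
  rw [Finset.sum_div, ← Finset.sum_sub_distrib]
  congr 1; ext i; ring

theorem pUncorrelated_linearIndependent
    {V : Type*} [NormedAddCommGroup V] [InnerProductSpace ℝ V]
    (z : V) (hz : (0:ℝ) < ⟪z, z⟫)
    (p : ℝ) (hp0 : 0 ≤ p) (hp1 : p ≤ 1)
    (n : ℕ) (X : Fin (n + 1) → V)
    (huncorr : ∀ i j, i ≠ j → pCov p z (X i) (X j) = 0)
    (hvar : ∀ j, 0 < pVar p z (X j)) :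
    LinearIndependent ℝ X := by
  rw [Fintype.linearIndependent_iff]
  intro g hg j
  have h := pCov_sum_left p z Finset.univ g X (X j)
  rw [hg] at h
  have h0 : pCov p z (0 : V) (X j) = 0 := by simp [pCov]
  rw [h0] at h
  have : (0:ℝ) = g j * pVar p z (X j) := by
    rw [h, Finset.sum_eq_single j]
    · rfl
    · intro i _ hij; rw [huncorr i j hij, mul_zero]
    · simp
  have hv := (hvar j).ne'
  rcases mul_eq_zero.mp this.symm with h1 | h1
  · exact h1
  · exact absurd h1 hv
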